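/- arXiv:1209.0475 — 4 statements merged into one kernel-verified Lean document; each statement's English description precedes it below -/
import Mathlib

section
/- Let p be an odd prime and d > 3p². For integers a, b, m, n, define min(a,b) as the minimum of the four quantities a² + ab + db², (a-p)² + (a-p)b + db², a² + a(b-p) + d(b-p)², (a-p)² + (a-p)(b-p) + d(b-p)², where 0 ≤ a, b, m, n < p. If min(a,b) = min(m,n), then (m,n) is congruent modulo p to one of (a,b), (-a-b,b), (-a,-b), (a+b,-b). -/
private lemma key_lemma (p d x y u v : ℤ) (hp : 0 < p) (hd : 3 * p ^ 2 < d)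
    (hx1 : -p ≤ x) (hx2 : x ≤ p) (hy1 : -p ≤ y) (hy2 : y ≤ p)
    (hu1 : -p ≤ u) (hu2 : u ≤ p) (hv1 : -p ≤ v) (hv2 : v ≤ p)
    (hq : x ^ 2 + x * y + d * y ^ 2 = u ^ 2 + u * v + d * v ^ 2) :
    (u = x ∧ v = y) ∨ (u = -x - y ∧ v = y) ∨ (u = -x ∧ v = -y) ∨ (u = x + y ∧ v = -y) := by
  have h4 : (2*x+y)^2 + (4*d-1)*y^2 = (2*u+v)^2 + (4*d-1)*v^2 := by linear_combination 4*hq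
  have hb1 : (3*p - (2*u+v)) * (3*p + (2*u+v)) ≥ 0 := by nlinarith
  have hb2 : (3*p - (2*x+y)) * (3*p + (2*x+y)) ≥ 0 := by nlinarith
  have h1 : y ^ 2 ≤ v ^ 2 := by nlinarith [sq_nonneg (2*x+y), sq_nonneg (2*u+v)]
  have h2 : v ^ 2 ≤ y ^ 2 := by nlinarith [sq_nonneg (2*x+y), sq_nonneg (2*u+v)]
  have hyv : y ^ 2 = v ^ 2 := le_antisymm h1 h2
  have hsq : (2*x+y)^2 = (2*u+v)^2 := by linear_combination h4 - (4*d-1)*hyv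
  have hv0 : (v - y) * (v + y) = 0 := by linear_combination -hyv
  have hu0 : ((2*u+v) - (2*x+y)) * ((2*u+v) + (2*x+y)) = 0 := by linear_combination -hsq
  rcases mul_eq_zero.mp hv0 with hv' | hv' <;> rcases mul_eq_zero.mp hu0 with hu' | hu'
  · left; constructor <;> linarith
  · right; left; constructor <;> linarith
  · right; right; right; constructor <;> linarith
  · right; right; left; constructor <;> linarith

private lemma min4 (A B C D : ℤ) :
    min (min A B) (min C D) = A ∨ min (min A B) (min C D) = B ∨
    min (min A B) (min C D) = C ∨ min (min A B) (min C D) = D := by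
  rcases min_choice (min A B) (min C D) with h1 | h1 <;> rw [h1]
  · rcases min_choice A B with h2 | h2 <;> rw [h2] <;> tauto
  · rcases min_choice C D with h2 | h2 <;> rw [h2] <;> tauto

theorem stmt_14 (p : ℕ) (hp : p.Prime) (hodd : Odd p) (d : ℤ) (hd : 3 * (p : ℤ) ^ 2 < d)
    (a b m n : ℤ)
    (ha : 0 ≤ a) (ha' : a < p) (hb : 0 ≤ b) (hb' : b < p)
    (hm : 0 ≤ m) (hm' : m < p) (hn : 0 ≤ n) (hn' : n < p)
    (h : min (min (a ^ 2 + a * b + d * b ^ 2)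
                ((a - p) ^ 2 + (a - p) * b + d * b ^ 2))
             (min (a ^ 2 + a * (b - p) + d * (b - p) ^ 2)
                ((a - p) ^ 2 + (a - p) * (b - p) + d * (b - p) ^ 2)) =
         min (min (m ^ 2 + m * n + d * n ^ 2)
                ((m - p) ^ 2 + (m - p) * n + d * n ^ 2))
             (min (m ^ 2 + m * (n - p) + d * (n - p) ^ 2)
                ((m - p) ^ 2 + (m - p) * (n - p) + d * (n - p) ^ 2))) :
    (m ≡ a [ZMOD (p : ℤ)] ∧ n ≡ b [ZMOD (p : ℤ)]) ∨
    (m ≡ -a - b [ZMOD (p : ℤ)] ∧ n ≡ b [ZMOD (p : ℤ)]) ∨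
    (m ≡ -a [ZMOD (p : ℤ)] ∧ n ≡ -b [ZMOD (p : ℤ)]) ∨
    (m ≡ a + b [ZMOD (p : ℤ)] ∧ n ≡ -b [ZMOD (p : ℤ)]) := by
  have hp0 : (0 : ℤ) < p := by exact_mod_cast hp.pos
  -- extract minimizers
  have hL : ∃ x y : ℤ, (x = a ∨ x = a - p) ∧ (y = b ∨ y = b - p) ∧
      min (min (a ^ 2 + a * b + d * b ^ 2) ((a - p) ^ 2 + (a - p) * b + d * b ^ 2))
          (min (a ^ 2 + a * (b - p) + d * (b - p) ^ 2)
            ((a - p) ^ 2 + (a - p) * (b - p) + d * (b - p) ^ 2))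
        = x ^ 2 + x * y + d * y ^ 2 := by
    rcases min4 (a ^ 2 + a * b + d * b ^ 2) ((a - p) ^ 2 + (a - p) * b + d * b ^ 2)
      (a ^ 2 + a * (b - p) + d * (b - p) ^ 2)
      ((a - p) ^ 2 + (a - p) * (b - p) + d * (b - p) ^ 2) with h1 | h1 | h1 | h1
    · exact ⟨a, b, Or.inl rfl, Or.inl rfl, h1⟩
    · exact ⟨a - p, b, Or.inr rfl, Or.inl rfl, h1⟩
    · exact ⟨a, b - p, Or.inl rfl, Or.inr rfl, h1⟩
    · exact ⟨a - p, b - p, Or.inr rfl, Or.inr rfl, h1⟩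
  have hR : ∃ u v : ℤ, (u = m ∨ u = m - p) ∧ (v = n ∨ v = n - p) ∧
      min (min (m ^ 2 + m * n + d * n ^ 2) ((m - p) ^ 2 + (m - p) * n + d * n ^ 2))
          (min (m ^ 2 + m * (n - p) + d * (n - p) ^ 2)
            ((m - p) ^ 2 + (m - p) * (n - p) + d * (n - p) ^ 2))
        = u ^ 2 + u * v + d * v ^ 2 := by
    rcases min4 (m ^ 2 + m * n + d * n ^ 2) ((m - p) ^ 2 + (m - p) * n + d * n ^ 2)
      (m ^ 2 + m * (n - p) + d * (n - p) ^ 2)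
      ((m - p) ^ 2 + (m - p) * (n - p) + d * (n - p) ^ 2) with h1 | h1 | h1 | h1
    · exact ⟨m, n, Or.inl rfl, Or.inl rfl, h1⟩
    · exact ⟨m - p, n, Or.inr rfl, Or.inl rfl, h1⟩
    · exact ⟨m, n - p, Or.inl rfl, Or.inr rfl, h1⟩
    · exact ⟨m - p, n - p, Or.inr rfl, Or.inr rfl, h1⟩
  obtain ⟨x, y, hx, hy, hLe⟩ := hL
  obtain ⟨u, v, hu, hv, hRe⟩ := hR
  have hq : x ^ 2 + x * y + d * y ^ 2 = u ^ 2 + u * v + d * v ^ 2 := by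
    rw [← hLe, ← hRe, h]
  have key := key_lemma p d x y u v hp0 hd
    (by rcases hx with rfl | rfl <;> linarith) (by rcases hx with rfl | rfl <;> linarith)
    (by rcases hy with rfl | rfl <;> linarith) (by rcases hy with rfl | rfl <;> linarith)
    (by rcases hu with rfl | rfl <;> linarith) (by rcases hu with rfl | rfl <;> linarith)
    (by rcases hv with rfl | rfl <;> linarith) (by rcases hv with rfl | rfl <;> linarith)
    hq
  -- congruences
  have hxa : x ≡ a [ZMOD (p : ℤ)] := by
    rcases hx with rfl | rfl
    · rfl
    · exact (Int.modEq_iff_dvd.mpr ⟨1, by ring⟩)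
  have hyb : y ≡ b [ZMOD (p : ℤ)] := by
    rcases hy with rfl | rfl
    · rfl
    · exact (Int.modEq_iff_dvd.mpr ⟨1, by ring⟩)
  have hmu : m ≡ u [ZMOD (p : ℤ)] := by
    rcases hu with rfl | rfl
    · rfl
    · exact (Int.modEq_iff_dvd.mpr ⟨-1, by ring⟩)
  have hnv : n ≡ v [ZMOD (p : ℤ)] := by
    rcases hv with rfl | rfl
    · rfl
    · exact (Int.modEq_iff_dvd.mpr ⟨-1, by ring⟩)
  rcases key with ⟨hu', hv'⟩ | ⟨hu', hv'⟩ | ⟨hu', hv'⟩ | ⟨hu', hv'⟩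
  · exact Or.inl ⟨(hu' ▸ hmu).trans hxa, (hv' ▸ hnv).trans hyb⟩
  · exact Or.inr (Or.inl ⟨(hu' ▸ hmu).trans (hxa.neg.sub hyb), (hv' ▸ hnv).trans hyb⟩)
  · exact Or.inr (Or.inr (Or.inl ⟨(hu' ▸ hmu).trans hxa.neg, (hv' ▸ hnv).trans hyb.neg⟩))
  · exact Or.inr (Or.inr (Or.inr ⟨(hu' ▸ hmu).trans (hxa.add hyb), (hv' ▸ hnv).trans hyb.neg⟩))
end

section
/- Let p be an odd prime, 0 ≤ a, b < p, ℓ = 4d - 1 with d a positive integer. The minimum of Q_d(x, y) over all integers x ≡ a (mod p), y ≡ b (mod p) equals the minimum of the four values Q_d(a,b), Q_d(a-p,b), Q_d(a,b-p), Q_d(a-p,b-p), provided d > 3p² — in fact the minimum over x ∈ {a, a-p}, y ∈ {b, b-p} suffices when d > p²/4 (i.e., the minimizing x, y satisfy |x|, |y| ≤ p). -/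
private lemma aux1 (p a y d x : ℤ) (hp : 3 ≤ p) (ha : 0 ≤ a) (ha' : a < p)
    (hy1 : -p ≤ y) (hy2 : y < p) (hx : p ∣ x - a) :
    min (a ^ 2 + a * y + d * y ^ 2) ((a - p) ^ 2 + (a - p) * y + d * y ^ 2)
      ≤ x ^ 2 + x * y + d * y ^ 2 := by
  obtain ⟨j, hj⟩ := hx
  have hx' : x = a + p * j := by linarith
  rcases le_or_gt 1 j with h1 | h1
  · refine le_trans (min_le_left _ _) ?_
    have h2 : p ≤ x - a := by nlinarith [mul_nonneg (show (0:ℤ) ≤ p by linarith) (show (0:ℤ) ≤ j - 1 by linarith)]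
    nlinarith [mul_nonneg (show (0:ℤ) ≤ x - a by linarith) (show (0:ℤ) ≤ x + a + y by linarith)]
  · rcases le_or_gt 0 j with h2 | h2
    · have hj0 : j = 0 := le_antisymm (by linarith) h2
      rw [hx', hj0]
      simpa using min_le_left _ _
    · rcases le_or_gt (-1) j with h3 | h3
      · have hj1 : j = -1 := le_antisymm (by linarith) h3
        rw [hx', hj1]
        have : a + p * (-1) = a - p := by ring
        rw [this]
        exact min_le_right _ _
      · refine le_trans (min_le_right _ _) ?_
        have h4 : x ≤ a - 2 * p := by nlinarith [mul_nonneg (show (0:ℤ) ≤ p by linarith) (show (0:ℤ) ≤ -2 - j by linarith)]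
        nlinarith [mul_pos (show (0:ℤ) < a - p - x by linarith) (show (0:ℤ) < p - a - y - x by linarith)]

private lemma aux2 (p d u v : ℤ) (hp : 3 ≤ p) (hd : p ^ 2 + 1 ≤ 4 * d)
    (hu : 2 * u ≤ p - 1) (hu' : 1 - p ≤ 2 * u) (hv : 2 * v ≤ p - 1) (hv' : 1 - p ≤ 2 * v) :
    4 * (u ^ 2 + u * v + d * v ^ 2) ≤ (4 * d - 1) * p ^ 2 := by
  have h1 : (2 * (2 * u + v)) ^ 2 ≤ (3 * (p - 1)) ^ 2 :=
    sq_le_sq' (by linarith) (by linarith)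
  have h2 : (2 * v) ^ 2 ≤ (p - 1) ^ 2 := sq_le_sq' (by linarith) (by linarith)
  have h3 : (0:ℤ) ≤ 4 * d - 1 := by nlinarith
  have h4 : (4 * d - 1) * (2 * v) ^ 2 ≤ (4 * d - 1) * (p - 1) ^ 2 :=
    mul_le_mul_of_nonneg_left h2 h3
  nlinarith [sq_nonneg (p - 1), mul_nonneg (show (0:ℤ) ≤ 4 * d - 10 by nlinarith) (show (0:ℤ) ≤ 2 * p - 1 by linarith)]

theorem stmt_15 (p : ℕ) (hp : p.Prime) (hodd : Odd p) (d : ℤ) (hd4 : (p : ℤ) ^ 2 < 4 * d)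
    (a b : ℤ) (ha : 0 ≤ a) (ha' : a < p) (hb : 0 ≤ b) (hb' : b < p) :
    IsLeast {N : ℤ | ∃ x y : ℤ, x ≡ a [ZMOD (p : ℤ)] ∧ y ≡ b [ZMOD (p : ℤ)] ∧
        N = x ^ 2 + x * y + d * y ^ 2}
      (min (min (a ^ 2 + a * b + d * b ^ 2)
              ((a - p) ^ 2 + (a - p) * b + d * b ^ 2))
           (min (a ^ 2 + a * (b - p) + d * (b - p) ^ 2)
              ((a - p) ^ 2 + (a - p) * (b - p) + d * (b - p) ^ 2))) := by
  have hp3 : 3 ≤ p := by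
    obtain ⟨m, hm⟩ := hodd
    have := hp.two_le
    omega
  have hp3' : (3:ℤ) ≤ (p:ℤ) := by exact_mod_cast hp3
  have hd : (p:ℤ) ^ 2 + 1 ≤ 4 * d := by linarith
  have hoddZ : Odd ((p:ℕ) : ℤ) := by exact_mod_cast hodd
  have ea : (a:ℤ) ≡ a [ZMOD (p:ℤ)] := Int.ModEq.refl a
  have ea' : a - p ≡ a [ZMOD (p:ℤ)] := Int.modEq_iff_dvd.mpr ⟨1, by ring⟩
  have eb : (b:ℤ) ≡ b [ZMOD (p:ℤ)] := Int.ModEq.refl b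
  have eb' : b - p ≡ b [ZMOD (p:ℤ)] := Int.modEq_iff_dvd.mpr ⟨1, by ring⟩
  constructor
  · rcases min_choice (min (a ^ 2 + a * b + d * b ^ 2)
              ((a - p) ^ 2 + (a - p) * b + d * b ^ 2))
           (min (a ^ 2 + a * (b - p) + d * (b - p) ^ 2)
              ((a - p) ^ 2 + (a - p) * (b - p) + d * (b - p) ^ 2)) with h | h <;> rw [h]
    · rcases min_choice (a ^ 2 + a * b + d * b ^ 2)
          ((a - p) ^ 2 + (a - p) * b + d * b ^ 2) with h' | h' <;> rw [h']
      · exact ⟨a, b, ea, eb, rfl⟩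
      · exact ⟨a - p, b, ea', eb, rfl⟩
    · rcases min_choice (a ^ 2 + a * (b - p) + d * (b - p) ^ 2)
          ((a - p) ^ 2 + (a - p) * (b - p) + d * (b - p) ^ 2) with h' | h' <;> rw [h']
      · exact ⟨a, b - p, ea, eb', rfl⟩
      · exact ⟨a - p, b - p, ea', eb', rfl⟩
  · rintro N ⟨x, y, hx, hy, rfl⟩
    have hdx : (p:ℤ) ∣ x - a := Int.ModEq.dvd hx.symm
    have hdy : (p:ℤ) ∣ y - b := Int.ModEq.dvd hy.symm
    obtain ⟨k, hk⟩ := hdy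
    by_cases hk0 : k = 0
    · have hyb : y = b := by rw [hk0, mul_zero] at hk; linarith
      rw [hyb]
      exact le_trans (min_le_left _ _) (aux1 p a b d x hp3' ha ha' (by linarith) hb' hdx)
    · by_cases hk1 : k = -1
      · have hyb : y = b - p := by rw [hk1] at hk; linarith
        rw [hyb]
        exact le_trans (min_le_right _ _)
          (aux1 p a (b - p) d x hp3' ha ha' (by linarith) (by linarith) hdx)
      · have hy2 : (p:ℤ) ^ 2 ≤ y ^ 2 := by
          rcases le_or_gt 1 k with h | h
          · have hyp : (p:ℤ) ≤ y := by
              nlinarith [mul_nonneg (show (0:ℤ) ≤ p by linarith) (show (0:ℤ) ≤ k - 1 by linarith)]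
            nlinarith
          · have hk2 : k ≤ -2 := by omega
            have hyp : y ≤ -(p:ℤ) := by
              nlinarith [mul_nonneg (show (0:ℤ) ≤ p by linarith) (show (0:ℤ) ≤ -2 - k by linarith)]
            nlinarith
        have hQ : (4 * d - 1) * (p:ℤ) ^ 2 ≤ 4 * (x ^ 2 + x * y + d * y ^ 2) := by
          nlinarith [sq_nonneg (2 * x + y),
            mul_nonneg (show (0:ℤ) ≤ 4 * d - 1 by nlinarith)
              (show (0:ℤ) ≤ y ^ 2 - (p:ℤ) ^ 2 by linarith)]
        have h2a : 2 * a ≠ (p:ℤ) := by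
          intro h
          rw [← h] at hoddZ
          exact (Int.not_odd_iff_even.mpr ⟨a, by ring⟩) hoddZ
        have h2b : 2 * b ≠ (p:ℤ) := by
          intro h
          rw [← h] at hoddZ
          exact (Int.not_odd_iff_even.mpr ⟨b, by ring⟩) hoddZ
        rcases lt_or_gt_of_ne h2a with hA | hA <;> rcases lt_or_gt_of_ne h2b with hB | hB
        · refine le_trans (le_trans (min_le_left _ _) (min_le_left _ _)) ?_
          have := aux2 p d a b hp3' hd (by linarith) (by linarith) (by linarith) (by linarith)
          linarith
        · refine le_trans (le_trans (min_le_right _ _) (min_le_left _ _)) ?_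
          have := aux2 p d a (b - p) hp3' hd (by linarith) (by linarith) (by linarith) (by linarith)
          linarith
        · refine le_trans (le_trans (min_le_left _ _) (min_le_right _ _)) ?_
          have := aux2 p d (a - p) b hp3' hd (by linarith) (by linarith) (by linarith) (by linarith)
          linarith
        · refine le_trans (le_trans (min_le_right _ _) (min_le_right _ _)) ?_
          have := aux2 p d (a - p) (b - p) hp3' hd (by linarith) (by linarith) (by linarith) (by linarith)
          linarith
end

section
/- Let C ⊆ R^n be a linear code over R = O_K/pO_K (n fixed), and for an admissible ℓ let Λ_ℓ(C) ⊆ O_K^n be the preimage of C under componentwise reduction mod p. Then Λ_ℓ(C) is an O_K-submodule of O_K^n containing (pO_K)^n, and the theta series θ_{Λ_ℓ(C)}(q) = Σ_{u ∈ Λ_ℓ(C)} q^{u·ū} satisfies: for admissible ℓ < ℓ', the coefficients of q^k in θ_{Λ_ℓ(C)} and θ_{Λ_{ℓ'}(C)} agree for all k < (ℓ+1)/4. -/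
/-- Multiplication on `(ZMod p)²`, viewing `(a, b)` as `a - b·ω` in `O_K/pO_K`,
where `ω² + ω + d = 0`. -/
def mulR (p : ℕ) (d : ℤ) (r x : ZMod p × ZMod p) : ZMod p × ZMod p :=
  (r.1 * x.1 - r.2 * x.2 * (d : ZMod p), r.1 * x.2 + r.2 * x.1 - r.2 * x.2)

/-- Multiplication on `ℤ²`, viewing `(a, b)` as `a - b·ω ∈ O_K`, where `ω² + ω + d = 0`. -/
def mulOK (d : ℤ) (r x : ℤ × ℤ) : ℤ × ℤ :=
  (r.1 * x.1 - r.2 * x.2 * d, r.1 * x.2 + r.2 * x.1 - r.2 * x.2)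

/-- Componentwise reduction `O_K → O_K/pO_K` in the coordinates `a - b·ω ↦ (a, b)`. -/
def redP (p : ℕ) (x : ℤ × ℤ) : ZMod p × ZMod p := (((x.1 : ZMod p)), ((x.2 : ZMod p)))

/-- Construction A: the preimage lattice `Λ_ℓ(C) ⊆ O_K^n` of a code `C ⊆ R^n`. -/
def latticeOf (p : ℕ) {n : ℕ} (C : Set (Fin n → ZMod p × ZMod p)) :
    Set (Fin n → ℤ × ℤ) :=
  {u | (fun i => redP p (u i)) ∈ C}

/-- The norm `u·ū = Σᵢ Q_d(aᵢ, bᵢ)` of `u ∈ O_K^n`, where `uᵢ = aᵢ - bᵢ·ω`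
and `d = (ℓ+1)/4`. -/
def normOf (d : ℤ) {n : ℕ} (u : Fin n → ℤ × ℤ) : ℤ :=
  ∑ i, ((u i).1 ^ 2 + (u i).1 * (u i).2 + d * (u i).2 ^ 2)


lemma norm_eq_iff (e : ℤ) (he : 1 ≤ e) {n : ℕ} (u : Fin n → ℤ × ℤ) (k : ℤ) (hk : k < e) :
    normOf e u = k ↔ (∀ i, (u i).2 = 0) ∧ ∑ i, (u i).1 ^ 2 = k := by
  constructor
  · intro h
    have hnn : ∀ i, 0 ≤ (u i).1 ^ 2 + (u i).1 * (u i).2 + e * (u i).2 ^ 2 := by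
      intro i; nlinarith [sq_nonneg (2 * (u i).1 + (u i).2), sq_nonneg (u i).2]
    have hb : ∀ i, (u i).2 = 0 := by
      intro i
      by_contra hb
      have hb2 : 1 ≤ (u i).2 ^ 2 := by
        rcases lt_or_gt_of_ne hb with h1 | h1 <;> nlinarith
      have hge : e ≤ (u i).1 ^ 2 + (u i).1 * (u i).2 + e * (u i).2 ^ 2 := by
        nlinarith [sq_nonneg (2 * (u i).1 + (u i).2)]
      have := Finset.single_le_sum (f := fun i => (u i).1 ^ 2 + (u i).1 * (u i).2 + e * (u i).2 ^ 2)
        (fun i _ => hnn i) (Finset.mem_univ i)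
      have : e ≤ normOf e u := le_trans hge this
      omega
    refine ⟨hb, ?_⟩
    rw [← h]
    unfold normOf
    exact Finset.sum_congr rfl (fun i _ => by rw [hb i]; ring)
  · rintro ⟨hb, hs⟩
    rw [← hs]
    unfold normOf
    exact Finset.sum_congr rfl (fun i _ => by rw [hb i]; ring)

theorem stmt_17 (p : ℕ) (hp : p.Prime) (hodd : Odd p) (n : ℕ)
    (C : Set (Fin n → ZMod p × ZMod p))
    (hC0 : 0 ∈ C)
    (hCadd : ∀ x y, x ∈ C → y ∈ C → x + y ∈ C)
    (l l' d d' : ℤ) (hl0 : 0 < l) (hl0' : 0 < l')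
    (hsf : Squarefree l) (hsf' : Squarefree l')
    (hmod : l % 4 = 3) (hmod' : l' % 4 = 3)
    (hpl : ¬ (p : ℤ) ∣ l) (hpl' : ¬ (p : ℤ) ∣ l')
    (hd : 4 * d = l + 1) (hd' : 4 * d' = l' + 1) (hll : l < l')
    (hCsmul : ∀ r : ZMod p × ZMod p, ∀ x ∈ C, (fun i => mulR p d r (x i)) ∈ C) :
    -- Λ_ℓ(C) contains (pO_K)^n
    (∀ u : Fin n → ℤ × ℤ,
        (fun i => ((p : ℤ) * (u i).1, (p : ℤ) * (u i).2)) ∈ latticeOf p C) ∧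
    -- Λ_ℓ(C) is closed under addition
    (∀ u v, u ∈ latticeOf p C → v ∈ latticeOf p C → u + v ∈ latticeOf p C) ∧
    -- Λ_ℓ(C) is closed under scalar multiplication by O_K
    (∀ r : ℤ × ℤ, ∀ u ∈ latticeOf p C, (fun i => mulOK d r (u i)) ∈ latticeOf p C) ∧
    -- the theta coefficients of Λ_ℓ(C) and Λ_ℓ'(C) agree below (ℓ+1)/4 = d
    (∀ k : ℤ, k < d →
      Nat.card {u : Fin n → ℤ × ℤ // u ∈ latticeOf p C ∧ normOf d u = k} =
        Nat.card {u : Fin n → ℤ × ℤ // u ∈ latticeOf p C ∧ normOf d' u = k}) := by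
  have hd1 : 1 ≤ d := by omega
  have hdd : d < d' := by omega
  refine ⟨?_, ?_, ?_, ?_⟩
  · intro u
    have : (fun i => redP p (((p : ℤ) * (u i).1, (p : ℤ) * (u i).2))) = 0 := by
      funext i
      simp [redP, Prod.ext_iff]
    simpa [latticeOf, this] using hC0
  · intro u v hu hv
    have := hCadd _ _ hu hv
    have heq : (fun i => redP p (u i)) + (fun i => redP p (v i))
        = fun i => redP p ((u + v) i) := by
      funext i
      simp [redP, Prod.ext_iff]
    simpa [latticeOf, heq] using this
  · intro r u hu
    have := hCsmul (redP p r) _ hu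
    have heq : (fun i => mulR p d (redP p r) ((fun i => redP p (u i)) i))
        = fun i => redP p (mulOK d r (u i)) := by
      funext i
      simp [redP, mulR, mulOK, Prod.ext_iff]
    simpa [latticeOf, heq] using this
  · intro k hk
    apply Nat.card_congr
    apply Equiv.subtypeEquivRight
    intro u
    rw [and_congr_right_iff]
    intro _
    rw [norm_eq_iff d hd1 u k hk, norm_eq_iff d' (by omega) u k (by omega)]
end

section
/- Let p be a prime, d = (ℓ+1)/4 with ℓ ≡ 3 (mod 4), and let C ⊆ ((ℤ/pℤ)²)^n be a set of codewords. For u = (u₁,...,uₙ) ∈ (ℤ²)^n reducing componentwise mod p into C, write ‖u‖ = Σᵢ Q_d(aᵢ,bᵢ) where uᵢ = (aᵢ,bᵢ). Then the number of u in the preimage of C with ‖u‖ = k and all bᵢ ≡ 0 reducing to a fixed codeword does not depend on d; consequently, for two values d < d', the counts #{u : ‖u‖ = k} with respect to d and d' coincide for all k < d. -/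
/-- `Q_d(x, y) = x² + xy + dy²` summed over the components of `u ∈ (ℤ²)^n`. -/
def normQ (d : ℤ) {n : ℕ} (u : Fin n → ℤ × ℤ) : ℤ :=
  ∑ i, ((u i).1 ^ 2 + (u i).1 * (u i).2 + d * (u i).2 ^ 2)

/-- Componentwise reduction mod `p`. -/
def redQ (p : ℕ) {n : ℕ} (u : Fin n → ℤ × ℤ) : Fin n → ZMod p × ZMod p :=
  fun i => (((u i).1 : ZMod p), ((u i).2 : ZMod p))

lemma termQ_nonneg (d a b : ℤ) (hd : 0 < d) : 0 ≤ a ^ 2 + a * b + d * b ^ 2 := by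
  nlinarith [sq_nonneg (2 * a + b), sq_nonneg b]

lemma termQ_ge (d a b : ℤ) (hd : 0 < d) (hb : b ≠ 0) :
    d ≤ a ^ 2 + a * b + d * b ^ 2 := by
  have h1 : 1 ≤ b ^ 2 := by
    have : 0 < b ^ 2 := by positivity
    omega
  nlinarith [sq_nonneg (2 * a + b)]

lemma normQ_eq_of_snd_zero (d d' : ℤ) {n : ℕ} (u : Fin n → ℤ × ℤ)
    (h : ∀ i, (u i).2 = 0) : normQ d u = normQ d' u := by
  unfold normQ
  refine Finset.sum_congr rfl fun i _ => ?_
  rw [h i]; ring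

lemma snd_zero_of_normQ_lt (d : ℤ) {n : ℕ} (u : Fin n → ℤ × ℤ) (hd : 0 < d)
    (h : normQ d u < d) : ∀ i, (u i).2 = 0 := by
  intro i
  by_contra hb
  have h1 := termQ_ge d (u i).1 (u i).2 hd hb
  have h2 : (u i).1 ^ 2 + (u i).1 * (u i).2 + d * (u i).2 ^ 2 ≤ normQ d u :=
    Finset.single_le_sum (fun j _ => termQ_nonneg d _ _ hd) (Finset.mem_univ i)
  omega

theorem stmt_18 (p : ℕ) (hp : p.Prime) (n : ℕ)
    (C : Set (Fin n → ZMod p × ZMod p)) :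
    -- the count over vectors with all bᵢ = 0 reducing to a fixed codeword
    -- does not depend on d
    (∀ d d' : ℤ, ∀ c ∈ C, ∀ k : ℤ,
      Nat.card {u : Fin n → ℤ × ℤ //
          redQ p u = c ∧ (∀ i, (u i).2 = 0) ∧ normQ d u = k} =
        Nat.card {u : Fin n → ℤ × ℤ //
          redQ p u = c ∧ (∀ i, (u i).2 = 0) ∧ normQ d' u = k}) ∧
    -- consequently, for d < d' the theta coefficients agree below d
    (∀ d d' : ℤ, 0 < d → d < d' → ∀ k : ℤ, k < d →
      Nat.card {u : Fin n → ℤ × ℤ // redQ p u ∈ C ∧ normQ d u = k} =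
        Nat.card {u : Fin n → ℤ × ℤ // redQ p u ∈ C ∧ normQ d' u = k}) := by
  constructor
  · intro d d' c hc k
    refine Nat.card_congr (Equiv.subtypeEquivRight fun u => ?_)
    constructor
    · rintro ⟨h1, h2, h3⟩
      exact ⟨h1, h2, by rw [normQ_eq_of_snd_zero d' d u h2]; exact h3⟩
    · rintro ⟨h1, h2, h3⟩
      exact ⟨h1, h2, by rw [normQ_eq_of_snd_zero d d' u h2]; exact h3⟩
  · intro d d' hd hdd' k hk
    refine Nat.card_congr (Equiv.subtypeEquivRight fun u => ?_)
    constructor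
    · rintro ⟨h1, h3⟩
      have hz : ∀ i, (u i).2 = 0 := snd_zero_of_normQ_lt d u hd (h3 ▸ hk)
      exact ⟨h1, by rw [normQ_eq_of_snd_zero d' d u hz]; exact h3⟩
    · rintro ⟨h1, h3⟩
      have hz : ∀ i, (u i).2 = 0 :=
        snd_zero_of_normQ_lt d' u (hd.trans hdd') (by omega)
      exact ⟨h1, by rw [normQ_eq_of_snd_zero d d' u hz]; exact h3⟩
end
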